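/- Let A₁, A₂, A₃ be the 5×5 complex matrices obtained from ρ_τ by setting (τ₁,τ₂,τ₃) equal to (1,0,0), (0,1,0), (0,0,1) respectively. Then their commutators satisfy the so(3) relations: [A₁, A₂] = A₃, [A₂, A₃] = A₁, and [A₃, A₁] = A₂, where [A,B] = AB − BA. Hence A₁, A₂, A₃ span a Lie algebra isomorphic to so(3) inside the 5×5 complex matrices. -/

import Mathlib

open Complex Matrix BigOperators Finset

noncomputable section

/-- The primitive cube root of unity `q = exp(2πi/3)`. -/
def q : ℂ := Complex.exp (2 * Real.pi * Complex.I / 3)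

/-- A rank-3 tensor in 3-dimensional space. -/
abbrev Tensor3 := Fin 3 → Fin 3 → Fin 3 → ℂ

/-- Condition T1: every trace of the tensor vanishes. -/
def CondT1 (T : Tensor3) : Prop :=
  ∀ j : Fin 3, (∑ i, T i i j = 0) ∧ (∑ i, T i j i = 0) ∧ (∑ i, T j i i = 0)

/-- Condition T2: all cyclic sums vanish. -/
def CondT2 (T : Tensor3) : Prop :=
  ∀ i j k : Fin 3, T i j k + T j k i + T k i j = 0

/-- The cyclic permutation operator `Φ_σ` on rank-3 tensors. -/
def Phi (T : Tensor3) : Tensor3 := fun i j k => T j k i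

/-- Action of a real 3×3 matrix on a rank-3 tensor. -/
def gact (g : Matrix (Fin 3) (Fin 3) ℝ) (T : Tensor3) : Tensor3 :=
  fun i j k => ∑ p, ∑ r, ∑ s, (g i p : ℂ) * (g j r : ℂ) * (g k s : ℂ) * T p r s

/-- The tensor `T(z)` associated with a point `z ∈ ℂ⁵`. -/
def Tz (z : Fin 5 → ℂ) : Tensor3 :=
  ![![![0, -(star q) * z 1 / (Real.sqrt 6 : ℂ), (star q) * z 2 / (Real.sqrt 6 : ℂ)],
     ![-q * z 1 / (Real.sqrt 6 : ℂ), z 0 / (Real.sqrt 6 : ℂ), z 3 / (Real.sqrt 3 : ℂ)],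
     ![q * z 2 / (Real.sqrt 6 : ℂ), q * z 4 / (Real.sqrt 3 : ℂ), -(z 0) / (Real.sqrt 6 : ℂ)]],
    ![![-(z 1) / (Real.sqrt 6 : ℂ), q * z 0 / (Real.sqrt 6 : ℂ), (star q) * z 4 / (Real.sqrt 3 : ℂ)],
     ![(star q) * z 0 / (Real.sqrt 6 : ℂ), 0, -(star q) * z 2 / (Real.sqrt 6 : ℂ)],
     ![(star q) * z 3 / (Real.sqrt 3 : ℂ), -q * z 2 / (Real.sqrt 6 : ℂ), z 1 / (Real.sqrt 6 : ℂ)]],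
    ![![z 2 / (Real.sqrt 6 : ℂ), q * z 3 / (Real.sqrt 3 : ℂ), -q * z 0 / (Real.sqrt 6 : ℂ)],
     ![z 4 / (Real.sqrt 3 : ℂ), -(z 2) / (Real.sqrt 6 : ℂ), q * z 1 / (Real.sqrt 6 : ℂ)],
     ![-(star q) * z 0 / (Real.sqrt 6 : ℂ), (star q) * z 1 / (Real.sqrt 6 : ℂ), 0]]]

/-- The matrix `K` of the invariant quadratic form
`K(z,z) = (z¹)² + (z²)² + (z³)² + 2q z⁴ z⁵`. -/
def Kmat : Matrix (Fin 5) (Fin 5) ℂ :=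
  !![1, 0, 0, 0, 0;
     0, 1, 0, 0, 0;
     0, 0, 1, 0, 0;
     0, 0, 0, 0, q;
     0, 0, 0, q, 0]

/-- The matrix `ρ_τ` of the infinitesimal action of `so(3)` on `ℂ⁵`. -/
def rho (τ₁ τ₂ τ₃ : ℝ) : Matrix (Fin 5) (Fin 5) ℂ :=
  !![0, (τ₃ : ℂ), -(τ₂ : ℂ), -(Real.sqrt 2 : ℂ) * τ₁, -(Real.sqrt 2 : ℂ) * q * τ₁;
     -(τ₃ : ℂ), 0, (τ₁ : ℂ), -(Real.sqrt 2 : ℂ) * (star q) * τ₂, -(Real.sqrt 2 : ℂ) * (star q) * τ₂;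
     (τ₂ : ℂ), -(τ₁ : ℂ), 0, -(Real.sqrt 2 : ℂ) * q * τ₃, -(Real.sqrt 2 : ℂ) * τ₃;
     (Real.sqrt 2 : ℂ) * τ₁, (Real.sqrt 2 : ℂ) * q * τ₂, (Real.sqrt 2 : ℂ) * (star q) * τ₃, 0, 0;
     (Real.sqrt 2 : ℂ) * (star q) * τ₁, (Real.sqrt 2 : ℂ) * q * τ₂, (Real.sqrt 2 : ℂ) * τ₃, 0, 0]


lemma q_pow_three : q ^ 3 = 1 := by
  rw [q, ← Complex.exp_nat_mul]
  rw [show (3:ℕ) * (2 * (Real.pi:ℂ) * Complex.I / 3) = 2 * Real.pi * Complex.I by push_cast; ring]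
  exact Complex.exp_two_pi_mul_I

lemma q_ne_one : q ≠ 1 := by
  have him : q.im = Real.sin (2 * Real.pi / 3) := by
    rw [q, show 2 * (Real.pi:ℂ) * Complex.I / 3 = ((2 * Real.pi / 3 : ℝ) : ℂ) * Complex.I by push_cast; ring]
    rw [Complex.exp_ofReal_mul_I_im]
  intro h
  rw [h] at him
  have : Real.sin (2 * Real.pi / 3) > 0 := by
    apply Real.sin_pos_of_pos_of_lt_pi <;> nlinarith [Real.pi_pos]
  simp [Complex.one_im] at him
  linarith

lemma q_sq : q ^ 2 = -q - 1 := by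
  have h : (q - 1) * (q ^ 2 + q + 1) = 0 := by
    linear_combination q_pow_three
  rcases mul_eq_zero.mp h with h1 | h2
  · exact absurd (sub_eq_zero.mp h1) q_ne_one
  · linear_combination h2

lemma star_q : star q = q ^ 2 := by
  have habs : ‖q‖ = 1 := by
    rw [q, Complex.norm_exp]
    norm_num
  have h1 : q * star q = 1 := by
    rw [Complex.star_def, Complex.mul_conj, Complex.normSq_eq_norm_sq, habs]
    norm_num
  have hqne0 : q ≠ 0 := by
    intro h; rw [h] at h1; simp at h1
  have h2 : q * star q = q * q ^ 2 := by
    rw [h1]; linear_combination -q_pow_three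
  exact mul_left_cancel₀ hqne0 h2

lemma sqrt2_sq : (Real.sqrt 2 : ℂ) * (Real.sqrt 2 : ℂ) = 2 := by
  rw [← Complex.ofReal_mul, Real.mul_self_sqrt (by norm_num : (0:ℝ) ≤ 2)]
  norm_num

lemma rho1_eq : rho 1 0 0 =
    !![0,0,0,-(Real.sqrt 2:ℂ),-(Real.sqrt 2:ℂ)*q; 0,0,1,0,0; 0,-1,0,0,0;
       (Real.sqrt 2:ℂ),0,0,0,0; (Real.sqrt 2:ℂ)*q^2,0,0,0,0] := by
  rw [rho]; norm_num [star_q]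

lemma rho2_eq : rho 0 1 0 =
    !![0,0,-1,0,0; 0,0,0,-(Real.sqrt 2:ℂ)*q^2,-(Real.sqrt 2:ℂ)*q^2; 1,0,0,0,0;
       0,(Real.sqrt 2:ℂ)*q,0,0,0; 0,(Real.sqrt 2:ℂ)*q,0,0,0] := by
  rw [rho]; norm_num [star_q]

lemma rho3_eq : rho 0 0 1 =
    !![0,1,0,0,0; -1,0,0,0,0; 0,0,0,-(Real.sqrt 2:ℂ)*q,-(Real.sqrt 2:ℂ);
       0,0,(Real.sqrt 2:ℂ)*q^2,0,0; 0,0,(Real.sqrt 2:ℂ),0,0] := by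
  rw [rho]; norm_num [star_q]

set_option maxHeartbeats 2000000 in
lemma rel1 : rho 1 0 0 * rho 0 1 0 - rho 0 1 0 * rho 1 0 0 = rho 0 0 1 := by
  rw [rho1_eq, rho2_eq, rho3_eq]
  ext i j
  fin_cases i <;> fin_cases j
  · simp [Matrix.mul_apply, Fin.sum_univ_five, Matrix.vecHead, Matrix.vecTail]
  · simp [Matrix.mul_apply, Fin.sum_univ_five, Matrix.vecHead, Matrix.vecTail]
    try linear_combination ((-1) * ((Real.sqrt 2:ℂ))^2) * q_sq + ((1)) * sqrt2_sq
  · simp [Matrix.mul_apply, Fin.sum_univ_five, Matrix.vecHead, Matrix.vecTail]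
  · simp [Matrix.mul_apply, Fin.sum_univ_five, Matrix.vecHead, Matrix.vecTail]
  · simp [Matrix.mul_apply, Fin.sum_univ_five, Matrix.vecHead, Matrix.vecTail]
  · simp [Matrix.mul_apply, Fin.sum_univ_five, Matrix.vecHead, Matrix.vecTail]
    try linear_combination ((1) * ((Real.sqrt 2:ℂ))^2 + (-1) * q * ((Real.sqrt 2:ℂ))^2 + (1) * q^2 * ((Real.sqrt 2:ℂ))^2) * q_sq + ((-1)) * sqrt2_sq
  · simp [Matrix.mul_apply, Fin.sum_univ_five, Matrix.vecHead, Matrix.vecTail]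
  · simp [Matrix.mul_apply, Fin.sum_univ_five, Matrix.vecHead, Matrix.vecTail]
  · simp [Matrix.mul_apply, Fin.sum_univ_five, Matrix.vecHead, Matrix.vecTail]
  · simp [Matrix.mul_apply, Fin.sum_univ_five, Matrix.vecHead, Matrix.vecTail]
  · simp [Matrix.mul_apply, Fin.sum_univ_five, Matrix.vecHead, Matrix.vecTail]
  · simp [Matrix.mul_apply, Fin.sum_univ_five, Matrix.vecHead, Matrix.vecTail]
  · simp [Matrix.mul_apply, Fin.sum_univ_five, Matrix.vecHead, Matrix.vecTail]
  · simp [Matrix.mul_apply, Fin.sum_univ_five, Matrix.vecHead, Matrix.vecTail]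
    try linear_combination ((1) * ((Real.sqrt 2:ℂ))) * q_sq
  · simp [Matrix.mul_apply, Fin.sum_univ_five, Matrix.vecHead, Matrix.vecTail]
    try linear_combination ((1) * ((Real.sqrt 2:ℂ))) * q_sq
  · simp [Matrix.mul_apply, Fin.sum_univ_five, Matrix.vecHead, Matrix.vecTail]
  · simp [Matrix.mul_apply, Fin.sum_univ_five, Matrix.vecHead, Matrix.vecTail]
  · simp [Matrix.mul_apply, Fin.sum_univ_five, Matrix.vecHead, Matrix.vecTail]
    try linear_combination ((-1) * ((Real.sqrt 2:ℂ))) * q_sq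
  · simp [Matrix.mul_apply, Fin.sum_univ_five, Matrix.vecHead, Matrix.vecTail]
  · simp [Matrix.mul_apply, Fin.sum_univ_five, Matrix.vecHead, Matrix.vecTail]
  · simp [Matrix.mul_apply, Fin.sum_univ_five, Matrix.vecHead, Matrix.vecTail]
  · simp [Matrix.mul_apply, Fin.sum_univ_five, Matrix.vecHead, Matrix.vecTail]
  · simp [Matrix.mul_apply, Fin.sum_univ_five, Matrix.vecHead, Matrix.vecTail]
    try linear_combination ((-1) * ((Real.sqrt 2:ℂ))) * q_sq
  · simp [Matrix.mul_apply, Fin.sum_univ_five, Matrix.vecHead, Matrix.vecTail]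
  · simp [Matrix.mul_apply, Fin.sum_univ_five, Matrix.vecHead, Matrix.vecTail]

set_option maxHeartbeats 2000000 in
lemma rel2 : rho 0 1 0 * rho 0 0 1 - rho 0 0 1 * rho 0 1 0 = rho 1 0 0 := by
  rw [rho1_eq, rho2_eq, rho3_eq]
  ext i j
  fin_cases i <;> fin_cases j
  · simp [Matrix.mul_apply, Fin.sum_univ_five, Matrix.vecHead, Matrix.vecTail]
  · simp [Matrix.mul_apply, Fin.sum_univ_five, Matrix.vecHead, Matrix.vecTail]
  · simp [Matrix.mul_apply, Fin.sum_univ_five, Matrix.vecHead, Matrix.vecTail]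
  · simp [Matrix.mul_apply, Fin.sum_univ_five, Matrix.vecHead, Matrix.vecTail]
    try linear_combination ((1) * ((Real.sqrt 2:ℂ))) * q_sq
  · simp [Matrix.mul_apply, Fin.sum_univ_five, Matrix.vecHead, Matrix.vecTail]
    try linear_combination ((1) * ((Real.sqrt 2:ℂ))) * q_sq
  · simp [Matrix.mul_apply, Fin.sum_univ_five, Matrix.vecHead, Matrix.vecTail]
  · simp [Matrix.mul_apply, Fin.sum_univ_five, Matrix.vecHead, Matrix.vecTail]
  · simp [Matrix.mul_apply, Fin.sum_univ_five, Matrix.vecHead, Matrix.vecTail]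
    try linear_combination ((-1) * ((Real.sqrt 2:ℂ))^2 + (1) * q * ((Real.sqrt 2:ℂ))^2 + (-1) * q^2 * ((Real.sqrt 2:ℂ))^2) * q_sq + ((1)) * sqrt2_sq
  · simp [Matrix.mul_apply, Fin.sum_univ_five, Matrix.vecHead, Matrix.vecTail]
  · simp [Matrix.mul_apply, Fin.sum_univ_five, Matrix.vecHead, Matrix.vecTail]
  · simp [Matrix.mul_apply, Fin.sum_univ_five, Matrix.vecHead, Matrix.vecTail]
  · simp [Matrix.mul_apply, Fin.sum_univ_five, Matrix.vecHead, Matrix.vecTail]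
    try linear_combination ((1) * ((Real.sqrt 2:ℂ))^2) * q_sq + ((-1)) * sqrt2_sq
  · simp [Matrix.mul_apply, Fin.sum_univ_five, Matrix.vecHead, Matrix.vecTail]
  · simp [Matrix.mul_apply, Fin.sum_univ_five, Matrix.vecHead, Matrix.vecTail]
  · simp [Matrix.mul_apply, Fin.sum_univ_five, Matrix.vecHead, Matrix.vecTail]
  · simp [Matrix.mul_apply, Fin.sum_univ_five, Matrix.vecHead, Matrix.vecTail]
    try linear_combination ((-1) * ((Real.sqrt 2:ℂ))) * q_sq
  · simp [Matrix.mul_apply, Fin.sum_univ_five, Matrix.vecHead, Matrix.vecTail]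
  · simp [Matrix.mul_apply, Fin.sum_univ_five, Matrix.vecHead, Matrix.vecTail]
  · simp [Matrix.mul_apply, Fin.sum_univ_five, Matrix.vecHead, Matrix.vecTail]
  · simp [Matrix.mul_apply, Fin.sum_univ_five, Matrix.vecHead, Matrix.vecTail]
  · simp [Matrix.mul_apply, Fin.sum_univ_five, Matrix.vecHead, Matrix.vecTail]
    try linear_combination ((-1) * ((Real.sqrt 2:ℂ))) * q_sq
  · simp [Matrix.mul_apply, Fin.sum_univ_five, Matrix.vecHead, Matrix.vecTail]
  · simp [Matrix.mul_apply, Fin.sum_univ_five, Matrix.vecHead, Matrix.vecTail]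
  · simp [Matrix.mul_apply, Fin.sum_univ_five, Matrix.vecHead, Matrix.vecTail]
  · simp [Matrix.mul_apply, Fin.sum_univ_five, Matrix.vecHead, Matrix.vecTail]

set_option maxHeartbeats 2000000 in
lemma rel3 : rho 0 0 1 * rho 1 0 0 - rho 1 0 0 * rho 0 0 1 = rho 0 1 0 := by
  rw [rho1_eq, rho2_eq, rho3_eq]
  ext i j
  fin_cases i <;> fin_cases j
  · simp [Matrix.mul_apply, Fin.sum_univ_five, Matrix.vecHead, Matrix.vecTail]
  · simp [Matrix.mul_apply, Fin.sum_univ_five, Matrix.vecHead, Matrix.vecTail]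
  · simp [Matrix.mul_apply, Fin.sum_univ_five, Matrix.vecHead, Matrix.vecTail]
    try linear_combination ((1) * ((Real.sqrt 2:ℂ))^2) * q_sq + ((-1)) * sqrt2_sq
  · simp [Matrix.mul_apply, Fin.sum_univ_five, Matrix.vecHead, Matrix.vecTail]
  · simp [Matrix.mul_apply, Fin.sum_univ_five, Matrix.vecHead, Matrix.vecTail]
  · simp [Matrix.mul_apply, Fin.sum_univ_five, Matrix.vecHead, Matrix.vecTail]
  · simp [Matrix.mul_apply, Fin.sum_univ_five, Matrix.vecHead, Matrix.vecTail]
  · simp [Matrix.mul_apply, Fin.sum_univ_five, Matrix.vecHead, Matrix.vecTail]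
  · simp [Matrix.mul_apply, Fin.sum_univ_five, Matrix.vecHead, Matrix.vecTail]
    try linear_combination ((1) * ((Real.sqrt 2:ℂ))) * q_sq
  · simp [Matrix.mul_apply, Fin.sum_univ_five, Matrix.vecHead, Matrix.vecTail]
    try linear_combination ((1) * ((Real.sqrt 2:ℂ))) * q_sq
  · simp [Matrix.mul_apply, Fin.sum_univ_five, Matrix.vecHead, Matrix.vecTail]
    try linear_combination ((-1) * ((Real.sqrt 2:ℂ))^2) * q_sq + ((1)) * sqrt2_sq
  · simp [Matrix.mul_apply, Fin.sum_univ_five, Matrix.vecHead, Matrix.vecTail]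
  · simp [Matrix.mul_apply, Fin.sum_univ_five, Matrix.vecHead, Matrix.vecTail]
  · simp [Matrix.mul_apply, Fin.sum_univ_five, Matrix.vecHead, Matrix.vecTail]
  · simp [Matrix.mul_apply, Fin.sum_univ_five, Matrix.vecHead, Matrix.vecTail]
  · simp [Matrix.mul_apply, Fin.sum_univ_five, Matrix.vecHead, Matrix.vecTail]
  · simp [Matrix.mul_apply, Fin.sum_univ_five, Matrix.vecHead, Matrix.vecTail]
    try linear_combination ((-1) * ((Real.sqrt 2:ℂ))) * q_sq
  · simp [Matrix.mul_apply, Fin.sum_univ_five, Matrix.vecHead, Matrix.vecTail]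
  · simp [Matrix.mul_apply, Fin.sum_univ_five, Matrix.vecHead, Matrix.vecTail]
  · simp [Matrix.mul_apply, Fin.sum_univ_five, Matrix.vecHead, Matrix.vecTail]
  · simp [Matrix.mul_apply, Fin.sum_univ_five, Matrix.vecHead, Matrix.vecTail]
  · simp [Matrix.mul_apply, Fin.sum_univ_five, Matrix.vecHead, Matrix.vecTail]
    try linear_combination ((-1) * ((Real.sqrt 2:ℂ))) * q_sq
  · simp [Matrix.mul_apply, Fin.sum_univ_five, Matrix.vecHead, Matrix.vecTail]
  · simp [Matrix.mul_apply, Fin.sum_univ_five, Matrix.vecHead, Matrix.vecTail]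
  · simp [Matrix.mul_apply, Fin.sum_univ_five, Matrix.vecHead, Matrix.vecTail]
/-- The matrices `A₁ = ρ_{(1,0,0)}`, `A₂ = ρ_{(0,1,0)}`,
`A₃ = ρ_{(0,0,1)}` satisfy the `so(3)` commutation relations. -/
theorem rho_so3_commutation_relations :
    rho 1 0 0 * rho 0 1 0 - rho 0 1 0 * rho 1 0 0 = rho 0 0 1 ∧
    rho 0 1 0 * rho 0 0 1 - rho 0 0 1 * rho 0 1 0 = rho 1 0 0 ∧
    rho 0 0 1 * rho 1 0 0 - rho 1 0 0 * rho 0 0 1 = rho 0 1 0 :=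
  ⟨rel1, rel2, rel3⟩

end
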